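/- Let P : Mat_n(ℂ) × Mat_n(ℂ) → ℂ be a polynomial function of the matrix entries that is invariant under simultaneous conjugation, i.e. P(gXg^{−1}, gYg^{−1}) = P(X, Y) for all g ∈ GL_n(ℂ). If P(X, Y) = 0 for every commuting pair (XY = YX), then P(X, Y) = 0 for every pair with rank(XY − YX) ≤ 1. Equivalently, an invariant polynomial function on pairs of matrices whose commutator has rank at most 1 is completely determined by its values on pairs of commuting matrices. -/

import Mathlib

open MvPolynomial

/-- Evaluation of a polynomial in the entries of a pair of `n × n` matrices. -/
noncomputable def evalPair {n : ℕ}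
    (P : MvPolynomial ((Fin n × Fin n) ⊕ (Fin n × Fin n)) ℂ)
    (X Y : Matrix (Fin n) (Fin n) ℂ) : ℂ :=
  MvPolynomial.eval (Sum.elim (fun q => X q.1 q.2) (fun q => Y q.1 q.2)) P

open Module LinearMap

lemma exists_common_eigenvector :
    ∀ (k : ℕ) (V : Type) [AddCommGroup V] [Module ℂ V] [FiniteDimensional ℂ V],
    0 < Module.finrank ℂ V → Module.finrank ℂ V ≤ k →
    ∀ f g : Module.End ℂ V, Module.finrank ℂ (LinearMap.range (f * g - g * f)) ≤ 1 →
    ∃ v : V, v ≠ 0 ∧ ∃ a b : ℂ, f v = a • v ∧ g v = b • v := by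
  intro k
  induction k with
  | zero => intro V _ _ _ h0 hle f g _; omega
  | succ k ih =>
    intro V _ _ _ h0 hle f g hrank
    have hnt : Nontrivial V := by
      rw [← Module.finrank_pos_iff (R := ℂ)]; exact h0
    obtain ⟨μ, hμ⟩ := Module.End.exists_eigenvalue f
    by_cases hgW : ∀ w ∈ f.eigenspace μ, g w ∈ f.eigenspace μ
    · have hWnt : Nontrivial (f.eigenspace μ) :=
        Submodule.nontrivial_iff_ne_bot.mpr hμ
      obtain ⟨ν, hν⟩ := Module.End.exists_eigenvalue (g.restrict hgW)
      obtain ⟨w, hw⟩ := hν.exists_hasEigenvector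
      refine ⟨(w : V), by simpa using hw.right, μ, ν, ?_, ?_⟩
      · exact Module.End.mem_eigenspace_iff.mp w.2
      · have := hw.apply_eq_smul
        calc g (w : V) = ((g.restrict hgW) w : V) := rfl
        _ = ν • (w : V) := by rw [this]; rfl
    · push_neg at hgW
      obtain ⟨w, hwW, hgw⟩ := hgW
      set h : Module.End ℂ V := f - μ • 1 with hh
      have hker : LinearMap.ker h = f.eigenspace μ :=
        (Module.End.eigenspace_def).symm
      have happ : ∀ x, h x = f x - μ • x := by
        intro x; simp [hh, LinearMap.sub_apply]
      have key : h (g w) ≠ 0 := by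
        intro hz
        rw [happ, sub_eq_zero] at hz
        exact hgw (Module.End.mem_eigenspace_iff.mpr hz)
      have hCw : (f * g - g * f) w = h (g w) := by
        have hfw : f w = μ • w := Module.End.mem_eigenspace_iff.mp hwW
        simp only [happ, LinearMap.sub_apply, Module.End.mul_apply, hfw, map_smul]
      set U := LinearMap.range h with hU
      have hUf : ∀ x ∈ U, f x ∈ U := by
        rintro x ⟨u, rfl⟩
        refine ⟨f u, ?_⟩
        simp only [happ, map_sub, map_smul]
      have hrangeC : LinearMap.range (f * g - g * f) ≤ U := by
        have hmem : (f * g - g * f) w ∈ LinearMap.range (f * g - g * f) :=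
          LinearMap.mem_range_self _ w
        have h1 : Submodule.span ℂ {(f * g - g * f) w} ≤ LinearMap.range (f * g - g * f) := by
          rw [Submodule.span_singleton_le_iff_mem]; exact hmem
        have h2 : LinearMap.range (f * g - g * f) = Submodule.span ℂ {(f * g - g * f) w} := by
          refine (Submodule.eq_of_le_of_finrank_le h1 ?_).symm
          rw [finrank_span_singleton (by rw [hCw]; exact key)]
          exact hrank
        rw [h2, Submodule.span_singleton_le_iff_mem, hCw]
        exact LinearMap.mem_range_self _ _
      have hUg : ∀ x ∈ U, g x ∈ U := by
        rintro x ⟨u, rfl⟩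
        have : g (h u) = h (g u) - (f * g - g * f) u := by
          simp only [happ, LinearMap.sub_apply, Module.End.mul_apply, map_sub, map_smul]
          abel
        rw [this]
        exact Submodule.sub_mem _ (LinearMap.mem_range_self _ _)
          (hrangeC (LinearMap.mem_range_self _ _))
      have hUnb : U ≠ ⊥ := by
        intro hbot
        apply key
        have : h (g w) ∈ U := LinearMap.mem_range_self _ _
        rwa [hbot, Submodule.mem_bot] at this
      have hUpos : 0 < Module.finrank ℂ U := by
        rw [Module.finrank_pos_iff (R := ℂ)]
        exact Submodule.nontrivial_iff_ne_bot.mpr hUnb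
      have hUlt : Module.finrank ℂ U < Module.finrank ℂ V := by
        have hrn := LinearMap.finrank_range_add_finrank_ker h
        rw [← hU] at hrn
        have hkpos : 0 < Module.finrank ℂ (LinearMap.ker h) := by
          rw [Module.finrank_pos_iff (R := ℂ)]
          exact Submodule.nontrivial_iff_ne_bot.mpr
            (by rw [hker]; exact Module.End.hasEigenvalue_iff.mp hμ)
        omega
      set f' := f.restrict hUf
      set g' := g.restrict hUg
      have hcomm' : U.subtype.comp (f' * g' - g' * f') =
          (f * g - g * f).comp U.subtype := by
        ext u
        simp [f', g', Module.End.mul_apply, LinearMap.sub_apply,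
          LinearMap.restrict_apply]
      have hrank' : Module.finrank ℂ (LinearMap.range (f' * g' - g' * f')) ≤ 1 := by
        have e1 := LinearEquiv.finrank_eq
          (Submodule.equivMapOfInjective U.subtype U.injective_subtype
            (LinearMap.range (f' * g' - g' * f')))
        have e2 : Submodule.map U.subtype (LinearMap.range (f' * g' - g' * f')) =
            LinearMap.range ((f * g - g * f).comp U.subtype) := by
          rw [← hcomm', LinearMap.range_comp]
        have e3 : LinearMap.range ((f * g - g * f).comp U.subtype) ≤
            LinearMap.range (f * g - g * f) := LinearMap.range_comp_le_range _ _
        calc Module.finrank ℂ (LinearMap.range (f' * g' - g' * f'))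
            = Module.finrank ℂ (Submodule.map U.subtype
              (LinearMap.range (f' * g' - g' * f'))) := e1
          _ ≤ Module.finrank ℂ (LinearMap.range (f * g - g * f)) := by
              rw [e2]; exact Submodule.finrank_mono e3
          _ ≤ 1 := hrank
      obtain ⟨v, hv0, a, b, hfa, hgb⟩ := ih U hUpos (by omega) f' g' hrank'
      refine ⟨(v : V), by simpa using hv0, a, b, ?_, ?_⟩
      · calc f (v : V) = ((f' v : U) : V) := rfl
          _ = a • (v : V) := by rw [hfa]; rfl
      · calc g (v : V) = ((g' v : U) : V) := rfl
          _ = b • (v : V) := by rw [hgb]; rfl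

open Module LinearMap Matrix

lemma matrix_common_eigenvector {n : ℕ} (hn : 0 < n) (X Y : Matrix (Fin n) (Fin n) ℂ)
    (h : Matrix.rank (X * Y - Y * X) ≤ 1) :
    ∃ v : Fin n → ℂ, v ≠ 0 ∧ ∃ a b : ℂ, X.mulVec v = a • v ∧ Y.mulVec v = b • v := by
  have hfin : 0 < Module.finrank ℂ (Fin n → ℂ) := by
    rw [Module.finrank_fin_fun]; exact hn
  have hC : (X * Y - Y * X).mulVecLin =
      X.mulVecLin * Y.mulVecLin - Y.mulVecLin * X.mulVecLin := by
    refine LinearMap.ext fun v => ?_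
    simp [Matrix.mulVecLin_apply, Matrix.sub_mulVec, Matrix.mulVec_mulVec,
      LinearMap.sub_apply, Module.End.mul_apply]
  have hrk : Module.finrank ℂ
      (LinearMap.range (X.mulVecLin * Y.mulVecLin - Y.mulVecLin * X.mulVecLin)) ≤ 1 := by
    rw [← hC]; exact h
  obtain ⟨v, hv, a, b, ha, hb⟩ :=
    exists_common_eigenvector (Module.finrank ℂ (Fin n → ℂ)) (Fin n → ℂ) hfin le_rfl
      X.mulVecLin Y.mulVecLin hrk
  exact ⟨v, hv, a, b, ha, hb⟩

/-- Embed an `n × n` matrix as the lower-right block of an `(n+1) × (n+1)` matrix,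
with a `1` in the upper-left corner. -/
def emb {n : ℕ} (M : Matrix (Fin n) (Fin n) ℂ) : Matrix (Fin (n + 1)) (Fin (n + 1)) ℂ :=
  Matrix.of (Fin.cons (Fin.cons 1 fun _ => 0) fun i' => Fin.cons 0 fun j' => M i' j')

@[simp] lemma emb_zero_zero {n : ℕ} (M : Matrix (Fin n) (Fin n) ℂ) : emb M 0 0 = 1 := rfl
@[simp] lemma emb_zero_succ {n : ℕ} (M : Matrix (Fin n) (Fin n) ℂ) (j : Fin n) :
    emb M 0 j.succ = 0 := by simp [emb]
@[simp] lemma emb_succ_zero {n : ℕ} (M : Matrix (Fin n) (Fin n) ℂ) (i : Fin n) :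
    emb M i.succ 0 = 0 := by simp [emb]
@[simp] lemma emb_succ_succ {n : ℕ} (M : Matrix (Fin n) (Fin n) ℂ) (i j : Fin n) :
    emb M i.succ j.succ = M i j := by simp [emb]

lemma emb_mul {n : ℕ} (M N : Matrix (Fin n) (Fin n) ℂ) :
    emb M * emb N = emb (M * N) := by
  ext i j
  rw [Matrix.mul_apply]
  induction i using Fin.cases with
  | zero =>
    induction j using Fin.cases with
    | zero => simp [Fin.sum_univ_succ]
    | succ j => simp [Fin.sum_univ_succ]
  | succ i =>
    induction j using Fin.cases with
    | zero => simp [Fin.sum_univ_succ]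
    | succ j => simp [Fin.sum_univ_succ, Matrix.mul_apply]

lemma emb_one {n : ℕ} : emb (1 : Matrix (Fin n) (Fin n) ℂ) = 1 := by
  ext i j
  induction i using Fin.cases with
  | zero =>
    induction j using Fin.cases with
    | zero => simp
    | succ j => simp [Matrix.one_apply, (Fin.succ_ne_zero j).symm]
  | succ i =>
    induction j using Fin.cases with
    | zero => simp [Matrix.one_apply, Fin.succ_ne_zero i]
    | succ j => simp [Matrix.one_apply, Fin.succ_inj]

/-- Lift a unit to a unit on the larger matrix ring. -/
def embU {n : ℕ} (h : (Matrix (Fin n) (Fin n) ℂ)ˣ) : (Matrix (Fin (n + 1)) (Fin (n + 1)) ℂ)ˣ where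
  val := emb h
  inv := emb (↑h⁻¹ : Matrix (Fin n) (Fin n) ℂ)
  val_inv := by rw [emb_mul, Units.mul_inv, emb_one]
  inv_val := by rw [emb_mul, Units.inv_mul, emb_one]

lemma rank_submatrix_succ_le {n : ℕ} (A : Matrix (Fin (n + 1)) (Fin (n + 1)) ℂ) :
    (A.submatrix Fin.succ Fin.succ).rank ≤ A.rank := by
  have h1 : A.submatrix Fin.succ Fin.succ =
      ((1 : Matrix (Fin (n + 1)) (Fin (n + 1)) ℂ).submatrix Fin.succ _root_.id) *
        (A * ((1 : Matrix (Fin (n + 1)) (Fin (n + 1)) ℂ).submatrix _root_.id Fin.succ)) := by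
    ext i j
    simp [Matrix.mul_apply, Matrix.one_apply, Finset.sum_ite_eq, Finset.sum_ite_eq']
  calc (A.submatrix Fin.succ Fin.succ).rank
      ≤ (A * ((1 : Matrix (Fin (n + 1)) (Fin (n + 1)) ℂ).submatrix _root_.id Fin.succ)).rank := by
        rw [h1]; exact Matrix.rank_mul_le_right _ _
    _ ≤ A.rank := Matrix.rank_mul_le_left _ _

lemma submatrix_succ_mul {n : ℕ} (M N : Matrix (Fin (n + 1)) (Fin (n + 1)) ℂ)
    (hM : ∀ i : Fin n, M i.succ 0 = 0) :
    (M * N).submatrix Fin.succ Fin.succ =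
      M.submatrix Fin.succ Fin.succ * N.submatrix Fin.succ Fin.succ := by
  ext i j
  simp [Matrix.mul_apply, Fin.sum_univ_succ, hM i]

lemma triangularize : ∀ (n : ℕ) (X Y : Matrix (Fin n) (Fin n) ℂ),
    Matrix.rank (X * Y - Y * X) ≤ 1 →
    ∃ g : (Matrix (Fin n) (Fin n) ℂ)ˣ,
      (∀ i j : Fin n, j < i →
        ((↑g : Matrix (Fin n) (Fin n) ℂ) * X * (↑g⁻¹ : Matrix (Fin n) (Fin n) ℂ)) i j = 0) ∧
      (∀ i j : Fin n, j < i →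
        ((↑g : Matrix (Fin n) (Fin n) ℂ) * Y * (↑g⁻¹ : Matrix (Fin n) (Fin n) ℂ)) i j = 0) := by
  intro n
  induction n with
  | zero => exact fun X Y _ => ⟨1, fun i => i.elim0, fun i => i.elim0⟩
  | succ n ih =>
    intro X Y hrank
    obtain ⟨v, hv, a, b, hXv, hYv⟩ := matrix_common_eigenvector n.succ_pos X Y hrank
    -- build a basis whose 0-th vector is `v`
    have hli : LinearIndepOn ℂ id ({v} : Set (Fin (n + 1) → ℂ)) :=
      (linearIndepOn_singleton_iff ℂ).mpr hv
    have hvmem : v ∈ hli.extend (Set.subset_univ _) :=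
      hli.subset_extend _ rfl
    let b0 : Basis (↥(hli.extend (Set.subset_univ _))) ℂ (Fin (n + 1) → ℂ) := Module.Basis.extend hli
    haveI : Fintype ↥(hli.extend (Set.subset_univ _)) :=
      FiniteDimensional.fintypeBasisIndex b0
    have hcard : Fintype.card ↥(hli.extend (Set.subset_univ _)) = n + 1 := by
      rw [← Module.finrank_eq_card_basis b0, Module.finrank_fin_fun]
    let e0 := Fintype.equivFinOfCardEq hcard
    let e := e0.trans (Equiv.swap (e0 ⟨v, hvmem⟩) 0)
    let bb := b0.reindex e
    have hbb0 : bb 0 = v := by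
      show (b0.reindex e) 0 = v
      rw [Module.Basis.reindex_apply]
      have : e.symm 0 = ⟨v, hvmem⟩ := by
        simp [e, Equiv.symm_trans_apply, Equiv.symm_swap, Equiv.swap_apply_right]
      rw [this]
      exact Basis.extend_apply_self hli _
    let B := (Pi.basisFun ℂ (Fin (n + 1))).toMatrix bb
    haveI : Invertible B := (Pi.basisFun ℂ (Fin (n + 1))).invertibleToMatrix bb
    let gB : (Matrix (Fin (n + 1)) (Fin (n + 1)) ℂ)ˣ := unitOfInvertible B
    have hBcol : B.mulVec (Pi.single (0 : Fin (n + 1)) 1) = v := by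
      funext i
      have hBi : B i 0 = v i := by
        show (Pi.basisFun ℂ (Fin (n + 1))).toMatrix bb i 0 = v i
        rw [Basis.toMatrix_apply, hbb0, Pi.basisFun_repr]
      simp [Matrix.mulVec_single, hBi]
    have hBinvcol : (↑gB⁻¹ : Matrix (Fin (n + 1)) (Fin (n + 1)) ℂ).mulVec v
        = Pi.single (0 : Fin (n + 1)) 1 := by
      rw [← hBcol, Matrix.mulVec_mulVec]
      have : (↑gB⁻¹ : Matrix (Fin (n + 1)) (Fin (n + 1)) ℂ) * B = 1 := by
        simpa [gB] using Units.inv_mul gB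
      rw [this, Matrix.one_mulVec]
    set X₁ := (↑gB⁻¹ : Matrix (Fin (n + 1)) (Fin (n + 1)) ℂ) * X * (↑gB : Matrix (Fin (n + 1)) (Fin (n + 1)) ℂ) with hX₁def
    set Y₁ := (↑gB⁻¹ : Matrix (Fin (n + 1)) (Fin (n + 1)) ℂ) * Y * (↑gB : Matrix (Fin (n + 1)) (Fin (n + 1)) ℂ) with hY₁def
    have hcol : ∀ (M : Matrix (Fin (n + 1)) (Fin (n + 1)) ℂ) (c : ℂ),
        M.mulVec v = c • v →
        ∀ i : Fin n, ((↑gB⁻¹ : Matrix (Fin (n + 1)) (Fin (n + 1)) ℂ) * M * (↑gB : Matrix (Fin (n + 1)) (Fin (n + 1)) ℂ)) i.succ 0 = 0 := by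
      intro M c hMv i
      have h1 : ((↑gB⁻¹ : Matrix (Fin (n + 1)) (Fin (n + 1)) ℂ) * M * (↑gB : Matrix (Fin (n + 1)) (Fin (n + 1)) ℂ)).mulVec
          (Pi.single (0 : Fin (n + 1)) 1) = c • (Pi.single (0 : Fin (n + 1)) 1 : Fin (n + 1) → ℂ) := by
        have : (↑gB : Matrix (Fin (n + 1)) (Fin (n + 1)) ℂ) = B := rfl
        rw [← Matrix.mulVec_mulVec, ← Matrix.mulVec_mulVec, this, hBcol, hMv,
          Matrix.mulVec_smul, hBinvcol]
      have h2 := congrFun h1 i.succ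
      rw [Matrix.mulVec_single] at h2
      simp only [MulOpposite.op_one, one_smul, Matrix.col_apply] at h2
      rw [h2, Pi.smul_apply, Pi.single_eq_of_ne (Fin.succ_ne_zero i), smul_zero]
    have hX₁col : ∀ i : Fin n, X₁ i.succ 0 = 0 := hcol X a hXv
    have hY₁col : ∀ i : Fin n, Y₁ i.succ 0 = 0 := hcol Y b hYv
    -- the lower-right blocks
    set X' := X₁.submatrix Fin.succ Fin.succ with hX'def
    set Y' := Y₁.submatrix Fin.succ Fin.succ with hY'def
    have hsubsub : (X₁ * Y₁ - Y₁ * X₁).submatrix Fin.succ Fin.succ =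
        (X₁ * Y₁).submatrix Fin.succ Fin.succ - (Y₁ * X₁).submatrix Fin.succ Fin.succ := rfl
    have hcommblock : X' * Y' - Y' * X' = (X₁ * Y₁ - Y₁ * X₁).submatrix Fin.succ Fin.succ := by
      rw [hsubsub, submatrix_succ_mul X₁ Y₁ hX₁col, submatrix_succ_mul Y₁ X₁ hY₁col]
    -- rank of the block commutator
    have hXY₁ : X₁ * Y₁ - Y₁ * X₁ =
        (↑gB⁻¹ : Matrix (Fin (n + 1)) (Fin (n + 1)) ℂ) * (X * Y - Y * X) * (↑gB : Matrix (Fin (n + 1)) (Fin (n + 1)) ℂ) := by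
      have hBB : (↑gB : Matrix (Fin (n + 1)) (Fin (n + 1)) ℂ) *
          (↑gB⁻¹ : Matrix (Fin (n + 1)) (Fin (n + 1)) ℂ) = 1 := Units.mul_inv gB
      have key : ∀ M N : Matrix (Fin (n + 1)) (Fin (n + 1)) ℂ,
          ((↑gB⁻¹ : Matrix (Fin (n + 1)) (Fin (n + 1)) ℂ) * (M : Matrix (Fin (n + 1)) (Fin (n + 1)) ℂ) * (↑gB : Matrix (Fin (n + 1)) (Fin (n + 1)) ℂ)) *
            ((↑gB⁻¹ : Matrix (Fin (n + 1)) (Fin (n + 1)) ℂ) * N * (↑gB : Matrix (Fin (n + 1)) (Fin (n + 1)) ℂ)) =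
            (↑gB⁻¹ : Matrix (Fin (n + 1)) (Fin (n + 1)) ℂ) * (M * N) * (↑gB : Matrix (Fin (n + 1)) (Fin (n + 1)) ℂ) := by
        intro M N
        calc ((↑gB⁻¹ : Matrix (Fin (n + 1)) (Fin (n + 1)) ℂ) * (M : Matrix (Fin (n + 1)) (Fin (n + 1)) ℂ) * (↑gB : Matrix (Fin (n + 1)) (Fin (n + 1)) ℂ)) *
              ((↑gB⁻¹ : Matrix (Fin (n + 1)) (Fin (n + 1)) ℂ) * N * (↑gB : Matrix (Fin (n + 1)) (Fin (n + 1)) ℂ))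
            = (↑gB⁻¹ : Matrix (Fin (n + 1)) (Fin (n + 1)) ℂ) * M *
              (((↑gB : Matrix (Fin (n + 1)) (Fin (n + 1)) ℂ) *
                (↑gB⁻¹ : Matrix (Fin (n + 1)) (Fin (n + 1)) ℂ)) *
                (N * (↑gB : Matrix (Fin (n + 1)) (Fin (n + 1)) ℂ))) := by
              simp only [Matrix.mul_assoc]
          _ = (↑gB⁻¹ : Matrix (Fin (n + 1)) (Fin (n + 1)) ℂ) * (M * N) * (↑gB : Matrix (Fin (n + 1)) (Fin (n + 1)) ℂ) := by
              rw [hBB, Matrix.one_mul]; simp only [Matrix.mul_assoc]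
      rw [hX₁def, hY₁def, key, key, Matrix.mul_sub, Matrix.sub_mul]
    have hrank' : Matrix.rank (X' * Y' - Y' * X') ≤ 1 := by
      rw [hcommblock]
      refine le_trans (rank_submatrix_succ_le _) ?_
      rw [hXY₁]
      have hu1 : IsUnit ((↑gB⁻¹ : Matrix (Fin (n + 1)) (Fin (n + 1)) ℂ)).det :=
        (Matrix.isUnit_iff_isUnit_det _).mp (gB⁻¹).isUnit
      have hu2 : IsUnit ((↑gB : Matrix (Fin (n + 1)) (Fin (n + 1)) ℂ)).det :=
        (Matrix.isUnit_iff_isUnit_det _).mp gB.isUnit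
      rw [Matrix.rank_mul_eq_left_of_isUnit_det _ _ hu2,
        Matrix.rank_mul_eq_right_of_isUnit_det _ _ hu1]
      exact hrank
    obtain ⟨h, hhX, hhY⟩ := ih X' Y' hrank'
    have hcoe : ∀ M : Matrix (Fin (n + 1)) (Fin (n + 1)) ℂ,
        (↑(embU h * gB⁻¹) : Matrix (Fin (n + 1)) (Fin (n + 1)) ℂ) * M *
          (↑(embU h * gB⁻¹)⁻¹ : Matrix (Fin (n + 1)) (Fin (n + 1)) ℂ) =
        emb (↑h : Matrix (Fin n) (Fin n) ℂ) * ((↑gB⁻¹ : Matrix (Fin (n + 1)) (Fin (n + 1)) ℂ) * M *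
          (↑gB : Matrix (Fin (n + 1)) (Fin (n + 1)) ℂ)) * emb (↑h⁻¹ : Matrix (Fin n) (Fin n) ℂ) := by
      intro M
      have h1 : (↑(embU h * gB⁻¹) : Matrix (Fin (n + 1)) (Fin (n + 1)) ℂ) =
          emb (↑h : Matrix (Fin n) (Fin n) ℂ) * (↑gB⁻¹ : Matrix (Fin (n + 1)) (Fin (n + 1)) ℂ) := rfl
      have h2 : (↑(embU h * gB⁻¹)⁻¹ : Matrix (Fin (n + 1)) (Fin (n + 1)) ℂ) =
          (↑gB : Matrix (Fin (n + 1)) (Fin (n + 1)) ℂ) * emb (↑h⁻¹ : Matrix (Fin n) (Fin n) ℂ) := by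
        rw [_root_.mul_inv_rev, Units.val_mul, inv_inv]
        rfl
      rw [h1, h2]
      simp only [Matrix.mul_assoc]
    have htri : ∀ R S M : Matrix (Fin (n + 1)) (Fin (n + 1)) ℂ,
        (∀ i : Fin n, M i.succ 0 = 0) →
        (∀ i j : Fin n, j < i →
          (R.submatrix Fin.succ Fin.succ * M.submatrix Fin.succ Fin.succ *
            S.submatrix Fin.succ Fin.succ) i j = 0) →
        (∀ i : Fin n, R i.succ 0 = 0) → (∀ i : Fin n, S i.succ 0 = 0) →
        ∀ i j : Fin (n + 1), j < i → (R * M * S) i j = 0 := by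
      intro R S M hMcol hMblk hRcol hScol
      have hMe : ∀ k : Fin n, (M * S) k.succ 0 = 0 := by
        intro k
        rw [Matrix.mul_apply, Fin.sum_univ_succ]
        simp [hMcol k, hScol]
      have hZcol : ∀ i : Fin n, (R * M * S) i.succ 0 = 0 := by
        intro i
        rw [Matrix.mul_assoc, Matrix.mul_apply, Fin.sum_univ_succ]
        simp [hMe, hRcol i, fun k => hMe k]
      have hZblk : (R * M * S).submatrix Fin.succ Fin.succ =
          R.submatrix Fin.succ Fin.succ * M.submatrix Fin.succ Fin.succ *
            S.submatrix Fin.succ Fin.succ := by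
        have hRMcol : ∀ i : Fin n, (R * M) i.succ 0 = 0 := by
          intro i
          rw [Matrix.mul_apply, Fin.sum_univ_succ]
          simp [hRcol i, hMcol]
        rw [submatrix_succ_mul _ _ hRMcol, submatrix_succ_mul _ _ hRcol]
      intro i j hij
      induction i using Fin.cases with
      | zero => exact absurd hij (Fin.not_lt_zero j)
      | succ i =>
        induction j using Fin.cases with
        | zero => exact hZcol i
        | succ j =>
          have hsub : (R * M * S).submatrix Fin.succ Fin.succ i j =
              (R.submatrix Fin.succ Fin.succ * M.submatrix Fin.succ Fin.succ *
                S.submatrix Fin.succ Fin.succ) i j := by rw [hZblk]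
          rw [Matrix.submatrix_apply] at hsub
          rw [hsub]
          exact hMblk i j (by simpa [Fin.succ_lt_succ_iff] using hij)
    refine ⟨embU h * gB⁻¹, ?_, ?_⟩
    · intro i j hij
      rw [hcoe X]
      refine htri _ _ X₁ hX₁col ?_ (fun i => emb_succ_zero _ i) (fun i => emb_succ_zero _ i) i j hij
      intro i j hij
      have e1 : (emb (↑h : Matrix (Fin n) (Fin n) ℂ)).submatrix Fin.succ Fin.succ =
          (↑h : Matrix (Fin n) (Fin n) ℂ) := by ext i j; simp
      have e2 : (emb (↑h⁻¹ : Matrix (Fin n) (Fin n) ℂ)).submatrix Fin.succ Fin.succ =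
          (↑h⁻¹ : Matrix (Fin n) (Fin n) ℂ) := by ext i j; simp
      rw [e1, e2]
      exact hhX i j hij
    · intro i j hij
      rw [hcoe Y]
      refine htri _ _ Y₁ hY₁col ?_ (fun i => emb_succ_zero _ i) (fun i => emb_succ_zero _ i) i j hij
      intro i j hij
      have e1 : (emb (↑h : Matrix (Fin n) (Fin n) ℂ)).submatrix Fin.succ Fin.succ =
          (↑h : Matrix (Fin n) (Fin n) ℂ) := by ext i j; simp
      have e2 : (emb (↑h⁻¹ : Matrix (Fin n) (Fin n) ℂ)).submatrix Fin.succ Fin.succ =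
          (↑h⁻¹ : Matrix (Fin n) (Fin n) ℂ) := by ext i j; simp
      rw [e1, e2]
      exact hhY i j hij

lemma eval_triangular_eq_zero {n : ℕ}
    (P : MvPolynomial ((Fin n × Fin n) ⊕ (Fin n × Fin n)) ℂ)
    (hinv : ∀ (g : Matrix.GeneralLinearGroup (Fin n) ℂ) (X Y : Matrix (Fin n) (Fin n) ℂ),
      evalPair P ((g : Matrix (Fin n) (Fin n) ℂ) * X * ((g⁻¹ : Matrix.GeneralLinearGroup (Fin n) ℂ) : Matrix (Fin n) (Fin n) ℂ))
        ((g : Matrix (Fin n) (Fin n) ℂ) * Y * ((g⁻¹ : Matrix.GeneralLinearGroup (Fin n) ℂ) : Matrix (Fin n) (Fin n) ℂ))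
        = evalPair P X Y)
    (hcomm : ∀ X Y : Matrix (Fin n) (Fin n) ℂ, X * Y = Y * X → evalPair P X Y = 0)
    (X Y : Matrix (Fin n) (Fin n) ℂ)
    (hX : ∀ i j : Fin n, j < i → X i j = 0) (hY : ∀ i j : Fin n, j < i → Y i j = 0) :
    evalPair P X Y = 0 := by
  classical
  set XF : ℂ → Matrix (Fin n) (Fin n) ℂ :=
    fun t => Matrix.of fun i j => X i j * t ^ ((j : ℕ) - (i : ℕ)) with hXF
  set YF : ℂ → Matrix (Fin n) (Fin n) ℂ :=
    fun t => Matrix.of fun i j => Y i j * t ^ ((j : ℕ) - (i : ℕ)) with hYF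
  set ent : ((Fin n × Fin n) ⊕ (Fin n × Fin n)) → Polynomial ℂ :=
    Sum.elim (fun q => Polynomial.C (X q.1 q.2) * Polynomial.X ^ ((q.2 : ℕ) - (q.1 : ℕ)))
      (fun q => Polynomial.C (Y q.1 q.2) * Polynomial.X ^ ((q.2 : ℕ) - (q.1 : ℕ))) with hent
  set F : Polynomial ℂ := MvPolynomial.eval₂ (Polynomial.C) ent P with hF
  have heval : ∀ t : ℂ, Polynomial.eval t F = evalPair P (XF t) (YF t) := by
    intro t
    have h1 : Polynomial.eval t F = (Polynomial.evalRingHom t) (MvPolynomial.eval₂ Polynomial.C ent P) := rfl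
    rw [h1, MvPolynomial.eval₂_comp_left (Polynomial.evalRingHom t) Polynomial.C ent P]
    have h2 : (Polynomial.evalRingHom t).comp (Polynomial.C : ℂ →+* Polynomial ℂ) = RingHom.id ℂ := by
      ext x; simp
    rw [h2]
    have h3 : ((Polynomial.evalRingHom t) ∘ ent) =
        Sum.elim (fun q => (XF t) q.1 q.2) (fun q => (YF t) q.1 q.2) := by
      funext s
      cases s with
      | inl q => simp [hent, hXF]
      | inr q => simp [hent, hYF]
    rw [h3]
    rfl
  have hconst : ∀ t : ℂ, t ≠ 0 → Polynomial.eval t F = evalPair P X Y := by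
    intro t ht
    set d : Fin n → ℂ := fun i => t ^ (n - (i : ℕ)) with hd
    have hdne : ∀ i, d i ≠ 0 := fun i => pow_ne_zero _ ht
    have hmul : Matrix.diagonal d * Matrix.diagonal (fun i => (d i)⁻¹) = 1 := by
      rw [Matrix.diagonal_mul_diagonal]
      have : (fun i => d i * (d i)⁻¹) = fun _ => (1 : ℂ) := by
        funext i; exact mul_inv_cancel₀ (hdne i)
      rw [this, Matrix.diagonal_one]
    have hmul' : Matrix.diagonal (fun i => (d i)⁻¹) * Matrix.diagonal d = 1 := by
      rw [Matrix.diagonal_mul_diagonal]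
      have : (fun i => (d i)⁻¹ * d i) = fun _ => (1 : ℂ) := by
        funext i; exact inv_mul_cancel₀ (hdne i)
      rw [this, Matrix.diagonal_one]
    set gt : Matrix.GeneralLinearGroup (Fin n) ℂ :=
      ⟨Matrix.diagonal d, Matrix.diagonal (fun i => (d i)⁻¹), hmul, hmul'⟩ with hgt
    have hconj : ∀ M : Matrix (Fin n) (Fin n) ℂ, (∀ i j : Fin n, j < i → M i j = 0) →
        (↑gt : Matrix (Fin n) (Fin n) ℂ) * M * (↑gt⁻¹ : Matrix (Fin n) (Fin n) ℂ) =
          Matrix.of fun i j => M i j * t ^ ((j : ℕ) - (i : ℕ)) := by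
      intro M hM
      have hcoe : (↑gt⁻¹ : Matrix (Fin n) (Fin n) ℂ) = Matrix.diagonal (fun i => (d i)⁻¹) := rfl
      ext i j
      rw [hcoe]
      show (Matrix.diagonal d * M * Matrix.diagonal fun i => (d i)⁻¹) i j = M i j * t ^ ((j : ℕ) - (i : ℕ))
      rw [Matrix.mul_diagonal, Matrix.diagonal_mul]
      rcases le_or_gt (i : ℕ) (j : ℕ) with hij | hij
      · have hsplit : n - (i : ℕ) = ((j : ℕ) - (i : ℕ)) + (n - (j : ℕ)) := by
          have := j.isLt; omega
        rw [hd]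
        simp only []
        rw [hsplit, pow_add]
        have hnz : (t : ℂ) ^ (n - (j : ℕ)) ≠ 0 := pow_ne_zero _ ht
        rw [show t ^ ((j:ℕ) - (i:ℕ)) * t ^ (n - (j:ℕ)) * M i j * (t ^ (n - (j:ℕ)))⁻¹ =
            M i j * t ^ ((j:ℕ) - (i:ℕ)) * (t ^ (n - (j:ℕ)) * (t ^ (n - (j:ℕ)))⁻¹) from by ring,
          mul_inv_cancel₀ hnz, mul_one]
      · have : M i j = 0 := hM i j (by exact_mod_cast hij)
        simp [this]
    have hXc := hconj X hX
    have hYc := hconj Y hY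
    rw [heval t]
    have := hinv gt X Y
    rw [hXc, hYc] at this
    exact this
  have hc : F = Polynomial.C (evalPair P X Y) := by
    apply Polynomial.eq_of_infinite_eval_eq
    apply Set.Infinite.mono (s := {t : ℂ | t ≠ 0})
    · intro t ht
      simp only [Set.mem_setOf_eq, Polynomial.eval_C]
      exact hconst t ht
    · have hset : {t : ℂ | t ≠ 0} = ({0} : Set ℂ)ᶜ := by
        ext t; simp
      rw [hset]
      exact (Set.finite_singleton (0 : ℂ)).infinite_compl
  have hzero : Polynomial.eval 0 F = evalPair P X Y := by
    rw [hc, Polynomial.eval_C]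
  have hdiag : ∀ (M : Matrix (Fin n) (Fin n) ℂ), (∀ i j : Fin n, j < i → M i j = 0) →
      (Matrix.of fun i j : Fin n => M i j * (0 : ℂ) ^ ((j : ℕ) - (i : ℕ))) =
        Matrix.diagonal (fun i => M i i) := by
    intro M hM
    ext i j
    rcases lt_trichotomy (i : ℕ) (j : ℕ) with hij | hij | hij
    · have hne : i ≠ j := fun hh => by subst hh; exact absurd hij (lt_irrefl _)
      have h0 : (0 : ℂ) ^ ((j : ℕ) - (i : ℕ)) = 0 := by
        rw [zero_pow]; omega
      rw [Matrix.diagonal_apply_ne _ hne]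
      simp [h0]
    · have : i = j := Fin.ext hij
      subst this
      simp
    · have hne : i ≠ j := fun hh => by subst hh; exact absurd hij (lt_irrefl _)
      have h0 : M i j = 0 := hM i j (by exact_mod_cast hij)
      rw [Matrix.diagonal_apply_ne _ hne]
      simp [h0]
  have hfinal : evalPair P (XF 0) (YF 0) = 0 := by
    have hx0 : XF 0 = Matrix.diagonal (fun i => X i i) := hdiag X hX
    have hy0 : YF 0 = Matrix.diagonal (fun i => Y i i) := hdiag Y hY
    rw [hx0, hy0]
    apply hcomm
    rw [Matrix.diagonal_mul_diagonal, Matrix.diagonal_mul_diagonal,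
      show (fun i => X i i * Y i i) = fun i => Y i i * X i i from
        funext fun i => mul_comm _ _]
  rw [← hzero, heval 0, hfinal]

/-- A polynomial function `P` on pairs of `n × n` complex matrices which is invariant under
simultaneous conjugation and vanishes on all commuting pairs also vanishes on every pair
whose commutator has rank at most `1`.  Equivalently, an invariant polynomial function on
pairs with `rank [X,Y] ≤ 1` is determined by its values on commuting pairs. -/
theorem invariant_vanishing_on_rank_le_one_commutator (n : ℕ)
    (P : MvPolynomial ((Fin n × Fin n) ⊕ (Fin n × Fin n)) ℂ)
    (hinv : ∀ (g : Matrix.GeneralLinearGroup (Fin n) ℂ) (X Y : Matrix (Fin n) (Fin n) ℂ),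
      evalPair P ((g : Matrix (Fin n) (Fin n) ℂ) * X * ((g⁻¹ : Matrix.GeneralLinearGroup (Fin n) ℂ) : Matrix (Fin n) (Fin n) ℂ))
        ((g : Matrix (Fin n) (Fin n) ℂ) * Y * ((g⁻¹ : Matrix.GeneralLinearGroup (Fin n) ℂ) : Matrix (Fin n) (Fin n) ℂ))
        = evalPair P X Y)
    (hcomm : ∀ X Y : Matrix (Fin n) (Fin n) ℂ, X * Y = Y * X → evalPair P X Y = 0) :
    ∀ X Y : Matrix (Fin n) (Fin n) ℂ,
      Matrix.rank (X * Y - Y * X) ≤ 1 → evalPair P X Y = 0 := by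
  intro X Y hrank
  obtain ⟨g, hgX, hgY⟩ := triangularize n X Y hrank
  rw [← hinv g X Y]
  exact eval_triangular_eq_zero P hinv hcomm _ _ hgX hgY
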